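/- For every real λ ≠ 0 the ratio of successive perturbative terms satisfies |u_{k+1}(λ)/u_k(λ)| = (1/(k+1))·((2k+3/2)(2k+1/2)/6)·|λ|, which tends to +∞ as k → ∞; consequently |u_k(λ)| → ∞ and the perturbative series Σ_{k=0}^∞ u_k(λ) diverges for every real λ ≠ 0. -/

import Mathlib

open MeasureTheory

noncomputable section

/-- The k-th term of the perturbative expansion of `Z`. -/
def u (k : ℕ) (lam : ℝ) : ℝ :=
  (1 / Real.sqrt Real.pi) * ((-1) ^ k / (Nat.factorial k : ℝ)) *
    Real.Gamma (1 / 2 + 2 * k) * (lam / 6) ^ k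

lemma gamma_arg_pos (k : ℕ) : (0:ℝ) < 1 / 2 + 2 * k := by positivity

lemma u_ne (k : ℕ) {lam : ℝ} (hlam : lam ≠ 0) : u k lam ≠ 0 := by
  have h1 : Real.sqrt Real.pi ≠ 0 := by
    positivity
  have h2 : Real.Gamma (1 / 2 + 2 * k) ≠ 0 := (Real.Gamma_pos_of_pos (gamma_arg_pos k)).ne'
  have h3 : (Nat.factorial k : ℝ) ≠ 0 := Nat.cast_ne_zero.mpr (Nat.factorial_ne_zero k)
  have h4 : (lam / 6 : ℝ) ≠ 0 := by simp [hlam]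
  unfold u
  positivity

lemma u_rec (k : ℕ) (lam : ℝ) :
    u (k + 1) lam = u k lam *
      (-(1 / ((k : ℝ) + 1)) * ((2 * (k : ℝ) + 3 / 2) * (2 * (k : ℝ) + 1 / 2)) * (lam / 6)) := by
  have hx : (1 / 2 + 2 * (k:ℝ)) ≠ 0 := (gamma_arg_pos k).ne'
  have hx1 : (1 / 2 + 2 * (k:ℝ) + 1) ≠ 0 := by positivity
  have hG1 : Real.Gamma (1 / 2 + 2 * (k:ℝ) + 1) = (1 / 2 + 2 * (k:ℝ)) * Real.Gamma (1 / 2 + 2 * k) :=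
    Real.Gamma_add_one hx
  have hG2 : Real.Gamma (1 / 2 + 2 * (k:ℝ) + 1 + 1)
      = (1 / 2 + 2 * (k:ℝ) + 1) * Real.Gamma (1 / 2 + 2 * (k:ℝ) + 1) := Real.Gamma_add_one hx1
  have harg : (1 / 2 + 2 * ((k:ℝ) + 1)) = 1 / 2 + 2 * (k:ℝ) + 1 + 1 := by ring
  have hf : ((Nat.factorial (k+1) : ℝ)) = ((k:ℝ) + 1) * (Nat.factorial k : ℝ) := by
    push_cast [Nat.factorial_succ]; ring
  have hk : ((k:ℝ) + 1) ≠ 0 := by positivity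
  have hfk : (Nat.factorial k : ℝ) ≠ 0 := Nat.cast_ne_zero.mpr (Nat.factorial_ne_zero k)
  unfold u
  push_cast
  rw [harg, hG2, hG1, hf]
  field_simp
  ring

/-- The ratio of successive perturbative terms grows without bound, the terms blow up,
and the perturbative series diverges for every real `λ ≠ 0`. -/
theorem perturbative_series_diverges (lam : ℝ) (hlam : lam ≠ 0) :
    (∀ k : ℕ, |u (k + 1) lam / u k lam| =
      (1 / ((k : ℝ) + 1)) * ((2 * (k : ℝ) + 3 / 2) * (2 * (k : ℝ) + 1 / 2) / 6) * |lam|) ∧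
    Filter.Tendsto (fun k : ℕ => |u (k + 1) lam / u k lam|) Filter.atTop Filter.atTop ∧
    Filter.Tendsto (fun k : ℕ => |u k lam|) Filter.atTop Filter.atTop ∧
    ¬ ∃ L : ℝ, Filter.Tendsto (fun n : ℕ => ∑ k ∈ Finset.range n, u k lam)
      Filter.atTop (nhds L) := by
  have hratio : ∀ k : ℕ, |u (k + 1) lam / u k lam| =
      (1 / ((k : ℝ) + 1)) * ((2 * (k : ℝ) + 3 / 2) * (2 * (k : ℝ) + 1 / 2) / 6) * |lam| := by
    intro k
    have hne := u_ne k hlam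
    rw [u_rec k lam, mul_comm (u k lam), mul_div_assoc, div_self hne, mul_one]
    have e : -(1 / ((k:ℝ) + 1)) * ((2 * (k:ℝ) + 3 / 2) * (2 * (k:ℝ) + 1 / 2)) * (lam / 6)
        = -((1 / ((k:ℝ) + 1)) * ((2 * (k:ℝ) + 3 / 2) * (2 * (k:ℝ) + 1 / 2) / 6) * lam) := by
      ring
    rw [e, abs_neg, abs_mul,
      abs_of_pos (show (0:ℝ) < (1 / ((k:ℝ) + 1)) * ((2 * (k:ℝ) + 3 / 2) * (2 * (k:ℝ) + 1 / 2) / 6)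
        by positivity)]
  have hlampos : 0 < |lam| := abs_pos.mpr hlam
  have hlow : ∀ k : ℕ, (k : ℝ) / 2 * |lam| ≤ |u (k + 1) lam / u k lam| := by
    intro k
    rw [hratio k]
    have hk0 : (0:ℝ) ≤ k := Nat.cast_nonneg k
    have hk1 : (0:ℝ) < (k:ℝ) + 1 := by positivity
    have : (k : ℝ) / 2 ≤ (1 / ((k : ℝ) + 1)) * ((2 * (k : ℝ) + 3 / 2) * (2 * (k : ℝ) + 1 / 2) / 6) := by
      rw [div_le_iff₀ (by norm_num : (0:ℝ) < 2), one_div, inv_mul_eq_div,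
        div_mul_eq_mul_div, le_div_iff₀ hk1]
      nlinarith
    exact mul_le_mul_of_nonneg_right this hlampos.le
  have htlow : Filter.Tendsto (fun k : ℕ => (k : ℝ) / 2 * |lam|) Filter.atTop Filter.atTop := by
    apply Filter.Tendsto.atTop_mul_const hlampos
    apply Filter.Tendsto.atTop_div_const (by norm_num)
    exact tendsto_natCast_atTop_atTop
  have h2 : Filter.Tendsto (fun k : ℕ => |u (k + 1) lam / u k lam|) Filter.atTop Filter.atTop :=
    Filter.tendsto_atTop_mono hlow htlow
  -- step 3
  obtain ⟨N, hN⟩ := (h2.eventually_ge_atTop 2).exists_forall_of_atTop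
  have hstep : ∀ k, N ≤ k → 2 * |u k lam| ≤ |u (k+1) lam| := by
    intro k hk
    have h := hN k hk
    have hne := u_ne k hlam
    have habs : |u k lam| > 0 := abs_pos.mpr hne
    have : |u (k+1) lam / u k lam| = |u (k+1) lam| / |u k lam| := abs_div _ _
    rw [this, le_div_iff₀ habs] at h
    linarith
  have hkey : ∀ m : ℕ, 2 ^ m * |u N lam| ≤ |u (N + m) lam| := by
    intro m
    induction m with
    | zero => simp
    | succ m ih =>
      have h := hstep (N + m) (Nat.le_add_right N m)
      calc 2 ^ (m+1) * |u N lam| = 2 * (2 ^ m * |u N lam|) := by ring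
        _ ≤ 2 * |u (N + m) lam| := by linarith
        _ ≤ |u (N + m + 1) lam| := h
        _ = |u (N + (m+1)) lam| := by ring_nf
  have huN : (0:ℝ) < |u N lam| := abs_pos.mpr (u_ne N hlam)
  have h3 : Filter.Tendsto (fun k : ℕ => |u k lam|) Filter.atTop Filter.atTop := by
    refine Filter.tendsto_atTop_mono' Filter.atTop
      (f₁ := fun k : ℕ => (2:ℝ) ^ (k - N) * |u N lam|) ?_ ?_
    · filter_upwards [Filter.eventually_ge_atTop N] with k hk
      have := hkey (k - N)
      rwa [Nat.add_sub_cancel' hk] at this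
    · apply Filter.Tendsto.atTop_mul_const huN
      exact (tendsto_pow_atTop_atTop_of_one_lt (by norm_num : (1:ℝ) < 2)).comp
        (Filter.tendsto_sub_atTop_nat N)
  refine ⟨hratio, h2, h3, ?_⟩
  rintro ⟨L, hL⟩
  have hterm : Filter.Tendsto (fun n : ℕ => u n lam) Filter.atTop (nhds 0) := by
    have h1 : Filter.Tendsto (fun n : ℕ => ∑ k ∈ Finset.range (n+1), u k lam)
        Filter.atTop (nhds L) := hL.comp (Filter.tendsto_add_atTop_nat 1)
    have := h1.sub hL
    simp only [Finset.sum_range_succ, add_sub_cancel_left, sub_self] at this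
    simpa using this
  have h0 : Filter.Tendsto (fun n : ℕ => |u n lam|) Filter.atTop (nhds 0) := by
    simpa using hterm.abs
  have h1 := h3.eventually_ge_atTop 1
  have h2' : ∀ᶠ n : ℕ in Filter.atTop, |u n lam| < 1 := by
    have := h0.eventually (gt_mem_nhds (by norm_num : (0:ℝ) < 1))
    exact this
  obtain ⟨n, hn1, hn2⟩ := (h1.and h2').exists
  linarith
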